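/- For every integer K ≥ 1 and every real number x, the sequence T ↦ T^{−K/2} · P_{T,K}(T + √T · x), indexed by natural numbers T, converges to He_K(x) as T → ∞. -/

import Mathlib

open scoped BigOperators

noncomputable section

/-- Rising factorial `a^{(j)} = a (a+1) ⋯ (a+j-1)`. -/
def rise (a : ℝ) (j : ℕ) : ℝ := ∏ i ∈ Finset.range j, (a + i)

/-- The polynomial `P_{T,K}(x) = ∑_{m=0}^K (K choose m) (−T)^{(K−m)} x^m`. -/
def P (T K : ℕ) (x : ℝ) : ℝ :=
  ∑ m ∈ Finset.range (K + 1), (K.choose m : ℝ) * rise (-(T : ℝ)) (K - m) * x ^ m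

/-- The `K`-th probabilist's Hermite polynomial, evaluated at a real `x`. -/
noncomputable def He (K : ℕ) (x : ℝ) : ℝ := Polynomial.aeval x (Polynomial.hermite K)

lemma rise_succ (a : ℝ) (j : ℕ) : rise a (j + 1) = rise a j * (a + j) :=
  Finset.prod_range_succ _ _

lemma derivative_hermite (n : ℕ) :
    Polynomial.derivative (Polynomial.hermite (n + 1))
      = Polynomial.C ((n : ℤ) + 1) * Polynomial.hermite n := by
  induction n with
  | zero => simp [Polynomial.hermite_one, Polynomial.hermite_zero]
  | succ n ih =>
    rw [Polynomial.hermite_succ (n + 1), Polynomial.derivative_sub, Polynomial.derivative_mul,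
      Polynomial.derivative_X, one_mul, ih, Polynomial.derivative_C_mul]
    simp only [Polynomial.hermite_succ n, map_add, map_one, Nat.cast_add, Nat.cast_one]
    ring

lemma He_rec (n : ℕ) (x : ℝ) :
    He (n + 2) x = x * He (n + 1) x - ((n : ℝ) + 1) * He n x := by
  unfold He
  rw [Polynomial.hermite_succ (n + 1), map_sub, map_mul, Polynomial.aeval_X,
    derivative_hermite n, map_mul, Polynomial.aeval_C]
  push_cast
  ring

lemma P_rec (T n : ℕ) (x : ℝ) :
    P T (n + 2) x = (x - (T : ℝ) + ((n : ℝ) + 1)) * P T (n + 1) x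
      - ((n : ℝ) + 1) * x * P T n x := by
  set a : ℕ → ℝ := rise (-(T : ℝ)) with ha
  -- Step A: peel off the m = 0 term and apply Pascal's rule
  have stepA : P T (n + 2) x
      = (∑ m ∈ Finset.range (n + 2), ((n + 1).choose m : ℝ) * a (n + 1 - m) * x ^ m) * x
        + (a (n + 2)
          + ∑ m ∈ Finset.range (n + 2),
              ((n + 1).choose (m + 1) : ℝ) * a (n + 1 - m) * x ^ (m + 1)) := by
    rw [P, show n + 2 + 1 = (n + 2) + 1 from rfl, Finset.sum_range_succ']
    have h1 : ∀ m ∈ Finset.range (n + 2),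
        ((n + 2).choose (m + 1) : ℝ) * a (n + 2 - (m + 1)) * x ^ (m + 1)
          = ((n + 1).choose m : ℝ) * a (n + 1 - m) * x ^ m * x
            + ((n + 1).choose (m + 1) : ℝ) * a (n + 1 - m) * x ^ (m + 1) := by
      intro m _
      rw [Nat.choose_succ_succ, Nat.succ_sub_succ]
      push_cast
      ring
    rw [Finset.sum_congr rfl h1, Finset.sum_add_distrib, ← Finset.sum_mul]
    simp [ha]
    ring
  -- Step B: the second big summand equals  ∑_{m < n+2} C(n+1,m) a(n+2-m) x^m
  have stepB : a (n + 2)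
        + ∑ m ∈ Finset.range (n + 2),
            ((n + 1).choose (m + 1) : ℝ) * a (n + 1 - m) * x ^ (m + 1)
      = ∑ m ∈ Finset.range (n + 2), ((n + 1).choose m : ℝ) * a (n + 2 - m) * x ^ m := by
    have h2 : ∑ m ∈ Finset.range (n + 2), ((n + 1).choose (m + 1) : ℝ) * a (n + 1 - m) * x ^ (m + 1)
        = ∑ m ∈ Finset.range (n + 1), ((n + 1).choose (m + 1) : ℝ) * a (n + 1 - m) * x ^ (m + 1) := by
      rw [Finset.sum_range_succ, Nat.choose_succ_self]
      simp
    rw [h2, show (n:ℕ) + 2 = (n + 1) + 1 from rfl, Finset.sum_range_succ' _ (n + 1)]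
    have h3 : ∀ m ∈ Finset.range (n + 1),
        ((n + 1).choose (m + 1) : ℝ) * a (n + 1 + 1 - (m + 1)) * x ^ (m + 1)
          = ((n + 1).choose (m + 1) : ℝ) * a (n + 1 - m) * x ^ (m + 1) := by
      intro m _
      rw [Nat.succ_sub_succ]
    rw [Finset.sum_congr rfl h3]
    simp [ha]
    ring
  -- Step C: rewrite a(n+2-m) using the rising-factorial recursion
  have stepC : ∑ m ∈ Finset.range (n + 2), ((n + 1).choose m : ℝ) * a (n + 2 - m) * x ^ m
      = (-(T : ℝ) + ((n : ℝ) + 1)) * P T (n + 1) x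
        - ∑ m ∈ Finset.range (n + 2),
            (m : ℝ) * (((n + 1).choose m : ℝ) * a (n + 1 - m) * x ^ m) := by
    have h4 : ∀ m ∈ Finset.range (n + 2),
        ((n + 1).choose m : ℝ) * a (n + 2 - m) * x ^ m
          = (-(T : ℝ) + ((n : ℝ) + 1)) * (((n + 1).choose m : ℝ) * a (n + 1 - m) * x ^ m)
            - (m : ℝ) * (((n + 1).choose m : ℝ) * a (n + 1 - m) * x ^ m) := by
      intro m hm
      rw [Finset.mem_range] at hm
      have hm' : m ≤ n + 1 := Nat.lt_succ_iff.mp hm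
      have hsub : n + 2 - m = (n + 1 - m) + 1 := by omega
      rw [hsub, ha, rise_succ]
      have hcast : ((n + 1 - m : ℕ) : ℝ) = (n : ℝ) + 1 - m := by
        rw [Nat.cast_sub hm']
        push_cast
        ring
      rw [hcast]
      ring
    rw [Finset.sum_congr rfl h4, Finset.sum_sub_distrib, ← Finset.mul_sum, P]
  -- Step D: the last sum equals (n+1) x P_n
  have stepD : ∑ m ∈ Finset.range (n + 2),
        (m : ℝ) * (((n + 1).choose m : ℝ) * a (n + 1 - m) * x ^ m)
      = ((n : ℝ) + 1) * x * P T n x := by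
    rw [Finset.sum_range_succ']
    have h6 : ∀ m ∈ Finset.range (n + 1),
        ((m + 1 : ℕ) : ℝ) * (((n + 1).choose (m + 1) : ℝ) * a (n + 1 - (m + 1)) * x ^ (m + 1))
          = ((n : ℝ) + 1) * x * ((n.choose m : ℝ) * a (n - m) * x ^ m) := by
      intro m _
      have hc : ((m : ℝ) + 1) * ((n + 1).choose (m + 1) : ℝ)
          = ((n : ℝ) + 1) * (n.choose m : ℝ) := by
        have h := Nat.add_one_mul_choose_eq n m
        have h' := congrArg (Nat.cast : ℕ → ℝ) h
        push_cast at h'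
        linarith
      rw [Nat.succ_sub_succ, pow_succ]
      push_cast
      linear_combination a (n - m) * x ^ m * x * hc
    rw [Finset.sum_congr rfl h6, ← Finset.mul_sum, P]
    simp [ha]
  rw [stepA, stepB, stepC, stepD, P]
  ring

lemma Q_tendsto (y : ℝ) : ∀ K : ℕ,
    Filter.Tendsto
      (fun T : ℕ => (T : ℝ) ^ (-(K : ℝ) / 2) * P T K ((T : ℝ) + Real.sqrt T * y))
      Filter.atTop (nhds (He K y)) := by
  have hhalf : Filter.Tendsto (fun T : ℕ => (T : ℝ) ^ (-(1 : ℝ) / 2))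
      Filter.atTop (nhds 0) := by
    have h := (tendsto_rpow_neg_atTop (by norm_num : (0 : ℝ) < 1 / 2)).comp
      (tendsto_natCast_atTop_atTop (R := ℝ))
    convert h using 2
    norm_num
  intro K
  induction K using Nat.twoStepInduction with
  | zero =>
    have h : ∀ T : ℕ, (T : ℝ) ^ (-((0 : ℕ) : ℝ) / 2) * P T 0 ((T : ℝ) + Real.sqrt T * y)
        = He 0 y := by
      intro T
      simp [P, rise, He, Polynomial.hermite_zero]
    exact Filter.Tendsto.congr (fun T => (h T).symm) tendsto_const_nhds
  | one =>
    have hHe : He 1 y = y := by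
      simp [He, Polynomial.hermite_one]
    have h : ∀ᶠ T : ℕ in Filter.atTop,
        (T : ℝ) ^ (-((1 : ℕ) : ℝ) / 2) * P T 1 ((T : ℝ) + Real.sqrt T * y) = y := by
      filter_upwards [Filter.eventually_ge_atTop 1] with T hT
      have hT0 : (0 : ℝ) < (T : ℝ) := by exact_mod_cast hT
      have hP : P T 1 ((T : ℝ) + Real.sqrt T * y) = Real.sqrt T * y := by
        simp [P, Finset.sum_range_succ, rise]
      rw [hP, Real.sqrt_eq_rpow, ← mul_assoc, ← Real.rpow_add hT0]
      norm_num
    rw [hHe]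
    exact Filter.Tendsto.congr' (h.mono fun T hT => hT.symm) tendsto_const_nhds
  | more K ih ih1 =>
    have key : ∀ᶠ T : ℕ in Filter.atTop,
        (T : ℝ) ^ (-((K + 2 : ℕ) : ℝ) / 2) * P T (K + 2) ((T : ℝ) + Real.sqrt T * y)
          = (y + ((K : ℝ) + 1) * (T : ℝ) ^ (-(1 : ℝ) / 2))
              * ((T : ℝ) ^ (-((K + 1 : ℕ) : ℝ) / 2) * P T (K + 1) ((T : ℝ) + Real.sqrt T * y))
            - ((K : ℝ) + 1) * (1 + y * (T : ℝ) ^ (-(1 : ℝ) / 2))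
              * ((T : ℝ) ^ (-((K : ℕ) : ℝ) / 2) * P T K ((T : ℝ) + Real.sqrt T * y)) := by
      filter_upwards [Filter.eventually_ge_atTop 1] with T hT
      have hT0 : (0 : ℝ) < (T : ℝ) := by exact_mod_cast hT
      have hsq : Real.sqrt (T : ℝ) * Real.sqrt (T : ℝ) = (T : ℝ) := Real.mul_self_sqrt hT0.le
      have hs0 : (0 : ℝ) < Real.sqrt (T : ℝ) := Real.sqrt_pos.mpr hT0
      rw [P_rec]
      have e3 : (T : ℝ) ^ (-((K + 2 : ℕ) : ℝ) / 2)
          = (T : ℝ) ^ (-(1 : ℝ) / 2) * (T : ℝ) ^ (-((K + 1 : ℕ) : ℝ) / 2) := by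
        rw [← Real.rpow_add hT0]
        congr 1
        push_cast
        ring
      have e4 : (T : ℝ) ^ (-((K + 1 : ℕ) : ℝ) / 2)
          = (T : ℝ) ^ (-(1 : ℝ) / 2) * (T : ℝ) ^ (-((K : ℕ) : ℝ) / 2) := by
        rw [← Real.rpow_add hT0]
        congr 1
        push_cast
        ring
      have hth : (T : ℝ) ^ (-(1 : ℝ) / 2) = (Real.sqrt (T : ℝ))⁻¹ := by
        rw [Real.sqrt_eq_rpow, show (-(1 : ℝ) / 2) = -(1 / 2 : ℝ) by norm_num,
          Real.rpow_neg hT0.le]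
      rw [e3, e4, hth]
      set s := Real.sqrt (T : ℝ) with hs
      set t0 := (T : ℝ) ^ (-((K : ℕ) : ℝ) / 2) with ht0
      rw [← hsq]
      field_simp
      ring
    have l1 : Filter.Tendsto (fun T : ℕ => y + ((K : ℝ) + 1) * (T : ℝ) ^ (-(1 : ℝ) / 2))
        Filter.atTop (nhds (y + ((K : ℝ) + 1) * 0)) :=
      tendsto_const_nhds.add (hhalf.const_mul _)
    have l2 : Filter.Tendsto (fun T : ℕ => ((K : ℝ) + 1) * (1 + y * (T : ℝ) ^ (-(1 : ℝ) / 2)))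
        Filter.atTop (nhds (((K : ℝ) + 1) * (1 + y * 0))) :=
      tendsto_const_nhds.mul (tendsto_const_nhds.add (hhalf.const_mul _))
    have lim := (l1.mul ih1).sub (l2.mul ih)
    refine Filter.Tendsto.congr' (key.mono fun T h => h.symm) ?_
    rw [He_rec]
    simpa using lim
  done

/-- `T^{−K/2} · P_{T,K}(T + √T·x) → He_K(x)` as `T → ∞`. -/
theorem rescaled_P_tendsto_hermite (K : ℕ) (hK : 1 ≤ K) (x : ℝ) :
    Filter.Tendsto
      (fun T : ℕ => (T : ℝ) ^ (-(K : ℝ) / 2) * P T K ((T : ℝ) + Real.sqrt T * x))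
      Filter.atTop (nhds (He K x)) := by
  exact Q_tendsto x K
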